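/- Under the isomorphisms δ_χ : Γ/χ(L*) ≅ H^1(G_k, M) and δ_p : L*/(L*)^p ≅ H^1(G_k, μ_p(L^sep)), the map δ_χ induces an isomorphism from Γ/χ(L*)ι(k*) onto the image of H^1(G_k, M) in H^1(G_k, M/μ_p), and δ_p induces an isomorphism from L*/(L*)^p k* onto the image of H^1(G_k, μ_p(L^sep)) in H^1(G_k, μ_p(L^sep)/μ_p). -/
import Mathlib

private lemma cocycle_div {G A : Type*} [Group G] [CommGroup A] [MulDistribMulAction G A]
    (g : G) (a m : A) : (g • a * a⁻¹) * (g • m * m⁻¹)⁻¹ = g • (a * m⁻¹) * (a * m⁻¹)⁻¹ := by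
  simp [smul_mul', smul_inv', mul_comm, mul_left_comm, mul_assoc]

private lemma idA {A : Type*} [CommGroup A] (x y z : A) : x * y * (z⁻¹ * x⁻¹) = y * z⁻¹ := by
  rw [mul_comm x y, mul_assoc, mul_comm z⁻¹ x⁻¹, mul_inv_cancel_left]

private lemma idB {A : Type*} [CommGroup A] (a X : A) : a * (a * X⁻¹)⁻¹ = X := by
  rw [mul_inv_rev, inv_inv, mul_comm X a⁻¹, mul_inv_cancel_left]

private lemma idC {A : Type*} [CommGroup A] (P Q R : A) : R * Q⁻¹ * (P * R⁻¹) = P * Q⁻¹ := by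
  rw [mul_comm P R⁻¹, mul_comm R Q⁻¹, mul_assoc, mul_inv_cancel_left, mul_comm Q⁻¹ P]

/-- Under the isomorphism `δ_χ : Γ/χ(L*) ≅ H^1(G_k, M)` (coming from the
`G`-equivariant exact sequence `1 → M → (L^sep)* →^χ Γ^sep → 1` with
`H^1(G, (L^sep)*) = 1`), the map `δ_χ` induces an isomorphism from
`Γ/χ(L*)ι(k*)` onto the image of `H^1(G, M)` in `H^1(G, M/μ_p)`.
(The statement for `δ_p : L*/(L*)^p ≅ H^1(G, μ_p(L^sep))`, inducing an isomorphism
`L*/(L*)^p k* ≅ image of H^1(G, μ_p(L^sep)) in H^1(G, μ_p(L^sep)/μ_p)`, is the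
instance of this abstract statement with `Γˢ = A`, `χ = (·)^p` and `ι = j`.)

Abstract setting: `G` acts on `A = (L^sep)*`, `B = (k^sep)*` and `Γˢ = Γ^sep`;
`j : B →* A` is the equivariant inclusion, `χ : A →* Γˢ` the equivariant surjection
with kernel `M`, `μ_p = j(ker((·)^p : B → B)) ⊆ M`, `ι : B →* Γˢ` the equivariant map
with `ι(b^p) = χ(j b)` (concretely `ι(x) = (x, x^{deg f/p})`), `H^1(G,A)` and
`H^1(G,B)` trivial, and `p`-th powers surjective on `B` (as `k^sep` is separably
closed).  Cocycles with values in `M/μ_p` are represented by maps `G → ker χ` up to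
pointwise multiplication by `μ := range of j on the p-torsion of B`:
(i)   the map `γ ↦ [g ↦ (g • a) * a⁻¹ mod μ]`, `χ a = γ`, kills `χ((A)^G)·ι((B)^G)`;
(ii)  injectivity on the quotient `Γ^G/χ(A^G)ι(B^G)`;
(iii) its image is exactly the image of `H^1(G, M)` in `H^1(G, M/μ_p)`. -/

theorem delta_chi_iso_onto_image_mod_mu
    {G A B Γs : Type*} [Group G] [CommGroup A] [CommGroup B] [CommGroup Γs]
    [MulDistribMulAction G A] [MulDistribMulAction G B] [MulDistribMulAction G Γs]
    (p : ℕ) (hp : p.Prime)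
    (j : B →* A) (hjinj : Function.Injective j)
    (hjequiv : ∀ (g : G) (b : B), j (g • b) = g • j b)
    (χ : A →* Γs) (hχsurj : Function.Surjective χ)
    (hχequiv : ∀ (g : G) (a : A), χ (g • a) = g • χ a)
    (ι : B →* Γs) (hιequiv : ∀ (g : G) (b : B), ι (g • b) = g • ι b)
    (hι : ∀ b : B, ι (b ^ p) = χ (j b))
    (hpB : ∀ b : B, ∃ b' : B, b' ^ p = b)      -- Kummer: p-th powers surject on k^sep*
    (hH1A : ∀ c : G → A, (∀ g h : G, c (g * h) = c g * g • c h) →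
      ∃ a : A, ∀ g : G, c g = g • a * a⁻¹)      -- H^1(G, (L^sep)*) = 1  (Hilbert 90)
    (hH1B : ∀ c : G → B, (∀ g h : G, c (g * h) = c g * g • c h) →
      ∃ b : B, ∀ g : G, c g = g • b * b⁻¹)      -- H^1(G, (k^sep)*) = 1  (Hilbert 90)
    -- μ ⊆ A denotes the image under j of the p-torsion of B (i.e. μ_p(k^sep) ⊆ M)
    (μ : Set A) (hμ : ∀ x : A, x ∈ μ ↔ ∃ b : B, b ^ p = 1 ∧ j b = x) :
    -- (i) δ_χ kills χ(A^G)·ι(B^G) in H^1(G, M/μ_p): for invariant γ = χ(a₀)·ι(b₀)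
    --     with a₀, b₀ invariant, the cocycle of γ is a coboundary modulo μ
    (∀ (a₀ : A) (b₀ : B), (∀ g : G, g • a₀ = a₀) → (∀ g : G, g • b₀ = b₀) →
      ∀ a : A, χ a = χ a₀ * ι b₀ →
        ∃ m : A, χ m = 1 ∧ ∀ g : G, (g • a * a⁻¹) * (g • m * m⁻¹)⁻¹ ∈ μ) ∧
    -- (ii) injectivity of the induced map on Γ^G/χ(A^G)ι(B^G)
    (∀ (γ : Γs) (a : A), χ a = γ → (∀ g : G, g • γ = γ) →
      (∃ m : A, χ m = 1 ∧ ∀ g : G, (g • a * a⁻¹) * (g • m * m⁻¹)⁻¹ ∈ μ) →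
      ∃ (a₀ : A) (b₀ : B), (∀ g : G, g • a₀ = a₀) ∧ (∀ g : G, g • b₀ = b₀) ∧
        γ = χ a₀ * ι b₀) ∧
    -- (iii) the image is the image of H^1(G, M) in H^1(G, M/μ_p): every cocycle with
    --       values in M = ker χ is, modulo μ and modulo M-coboundaries, the cocycle
    --       attached to some invariant γ ∈ Γ^G
    (∀ c : G → A, (∀ g : G, c g ∈ χ.ker) →
      (∀ g h : G, c (g * h) = c g * g • c h) →
      ∃ (γ : Γs) (a : A) (m : A), (∀ g : G, g • γ = γ) ∧ χ a = γ ∧ χ m = 1 ∧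
        ∀ g : G, c g * ((g • a * a⁻¹) * (g • m * m⁻¹))⁻¹ ∈ μ) := by
  refine ⟨?_, ?_, ?_⟩
  · -- (i)
    intro a₀ b₀ ha₀ hb₀ a ha
    obtain ⟨b₁, hb₁⟩ := hpB b₀
    refine ⟨a * (a₀ * j b₁)⁻¹, ?_, ?_⟩
    · rw [map_mul, map_inv, map_mul, ha, ← hι b₁, hb₁, mul_inv_cancel]
    · intro g
      rw [cocycle_div, idB]
      refine (hμ _).2 ⟨g • b₁ * b₁⁻¹, ?_, ?_⟩
      · rw [mul_pow, inv_pow, ← smul_pow', hb₁, hb₀ g, mul_inv_cancel]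
      · rw [map_mul, map_inv, hjequiv, smul_mul', ha₀ g, mul_inv_rev, idA]
  · -- (ii)
    rintro γ a hχa hγ ⟨m, hm, hmem⟩
    obtain ⟨a', ha'⟩ : ∃ a' : A, a' = a * m⁻¹ := ⟨_, rfl⟩
    have hχa' : χ a' = γ := by rw [ha', map_mul, map_inv, hm, inv_one, mul_one, hχa]
    have hmem' : ∀ g : G, g • a' * a'⁻¹ ∈ μ := by
      intro g; rw [ha', ← cocycle_div]; exact hmem g
    choose c hc1 hc2 using fun g : G => (hμ _).1 (hmem' g)
    have hcoc : ∀ g h : G, c (g * h) = c g * g • c h := by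
      intro g h
      apply hjinj
      rw [map_mul, hjequiv, hc2, hc2, hc2, mul_smul, smul_mul', smul_inv', idC]
    obtain ⟨b, hb⟩ := hH1B c hcoc
    have hgb : ∀ g : G, g • b = c g * b := by
      intro g; rw [hb g, inv_mul_cancel_right]
    refine ⟨a' * (j b)⁻¹, b ^ p, ?_, ?_, ?_⟩
    · intro g
      have h1 : g • a' = j (c g) * a' := by rw [hc2, inv_mul_cancel_right]
      have h2 : g • j b = j (c g) * j b := by rw [← hjequiv, hgb g, map_mul]
      rw [smul_mul', smul_inv', h1, h2, mul_inv_rev, idA]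
    · intro g
      rw [smul_pow', hgb g, mul_pow, hc1, one_mul]
    · rw [hι b, map_mul, map_inv, inv_mul_cancel_right, hχa']
  · -- (iii)
    intro c hcker hcoc
    obtain ⟨a, ha⟩ := hH1A c hcoc
    refine ⟨χ a, a, 1, ?_, rfl, map_one χ, ?_⟩
    · intro g
      rw [← hχequiv]
      have h1 : χ (c g) = 1 := hcker g
      rw [ha g, map_mul, map_inv] at h1
      exact mul_inv_eq_one.mp h1
    · intro g
      have he : c g * (g • a * a⁻¹ * (g • (1 : A) * 1⁻¹))⁻¹ = 1 := by
        rw [smul_one, ha g]; group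
      rw [he]
      exact (hμ 1).2 ⟨1, one_pow p, map_one j⟩
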